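/- Let A be a self-adjoint operator on a two-dimensional inner product space with eigenvalues μ = λ_max and ν = λ_min and eigenvector u₁ corresponding to μ. Then for every nonzero vector x, (1/2)(μ − ν) sin(2∠{x,u₁}) = ‖r(x)‖/‖x‖. -/

import Mathlib

open scoped RealInnerProductSpace
open Submodule

noncomputable section

variable {H : Type*} [NormedAddCommGroup H] [InnerProductSpace ℝ H]

/-- The Rayleigh quotient of `x` with respect to `A`. -/
def rq (A : H →L[ℝ] H) (x : H) : ℝ := ⟪x, A x⟫ / ⟪x, x⟫

/-- The residual of `x` with respect to `A`. -/
def res (A : H →L[ℝ] H) (x : H) : H := A x - rq A x • x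

/-- The acute angle between two vectors. -/
def ang (x y : H) : ℝ := Real.arccos (|⟪x, y⟫| / (‖x‖ * ‖y‖))

/-- In a two-dimensional space, if `μ ≥ ν` are the eigenvalues of a self-adjoint `A`
with orthonormal eigenvectors `u₁, u₂` (`u₁` for `μ`), then for every nonzero `x`:
`(1/2)(μ − ν) sin(2∠{x,u₁}) = ‖r(x)‖/‖x‖`. -/
theorem stmt_5 [FiniteDimensional ℝ H] (hdim : Module.finrank ℝ H = 2)
    (A : H →L[ℝ] H) (hA : IsSelfAdjoint A)
    (μ ν : ℝ) (hμν : ν ≤ μ) (u₁ u₂ : H) (hu₁ : ‖u₁‖ = 1) (hu₂ : ‖u₂‖ = 1)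
    (horth : ⟪u₁, u₂⟫ = 0) (he₁ : A u₁ = μ • u₁) (he₂ : A u₂ = ν • u₂)
    (x : H) (hx : x ≠ 0) :
    (1 / 2) * (μ - ν) * Real.sin (2 * ang x u₁) = ‖res A x‖ / ‖x‖ := by
  have horth' : ⟪u₂, u₁⟫ = 0 := by rw [real_inner_comm]; exact horth
  set a := ⟪u₁, x⟫ with ha
  set b := ⟪u₂, x⟫ with hb
  have hxd : x = a • u₁ + b • u₂ := by
    have hon : Orthonormal ℝ ![u₁, u₂] := by
      constructor
      · intro i; fin_cases i <;> simpa
      · intro i j hij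
        fin_cases i <;> fin_cases j <;> simp_all [real_inner_comm u₁ u₂]
    have hspan : span ℝ (Set.range ![u₁, u₂]) = ⊤ :=
      hon.linearIndependent.span_eq_top_of_card_eq_finrank (by simp [hdim])
    have hrange : Set.range ![u₁, u₂] = {u₁, u₂} := by
      ext y; simp [Fin.exists_fin_two]; tauto
    rw [hrange] at hspan
    set z := x - (a • u₁ + b • u₂) with hz
    have hz1 : ⟪u₁, z⟫ = 0 := by
      simp [hz, inner_sub_right, inner_add_right, inner_smul_right, horth,
        real_inner_self_eq_norm_sq, hu₁, ha]
    have hz2 : ⟪u₂, z⟫ = 0 := by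
      simp [hz, inner_sub_right, inner_add_right, inner_smul_right, horth',
        real_inner_self_eq_norm_sq, hu₂, hb]
    have hzmem : z ∈ (⊤ : Submodule ℝ H)ᗮ := by
      rw [← hspan]
      intro v hv
      rcases Submodule.mem_span_pair.mp hv with ⟨c, d, rfl⟩
      simp [inner_add_left, inner_smul_left, hz1, hz2]
    rw [Submodule.top_orthogonal_eq_bot] at hzmem
    exact (sub_eq_zero.mp hzmem)
  have hgen : ∀ c d : ℝ, ‖c • u₁ + d • u₂‖ ^ 2 = c ^ 2 + d ^ 2 := by
    intro c d
    rw [← real_inner_self_eq_norm_sq]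
    simp only [inner_add_left, inner_add_right, inner_smul_left, inner_smul_right,
      horth, horth', conj_trivial]
    rw [real_inner_self_eq_norm_sq, real_inner_self_eq_norm_sq, hu₁, hu₂]
    ring
  have hxn : ‖x‖ ^ 2 = a ^ 2 + b ^ 2 := by rw [hxd]; exact hgen a b
  have hxpos : (0:ℝ) < ‖x‖ := norm_pos_iff.mpr hx
  have hs : (0:ℝ) < a ^ 2 + b ^ 2 := by rw [← hxn]; positivity
  have hAx : A x = (μ * a) • u₁ + (ν * b) • u₂ := by
    conv_lhs => rw [hxd]
    simp [he₁, he₂, smul_smul, mul_comm]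
  have hiAx : ⟪x, A x⟫ = μ * a ^ 2 + ν * b ^ 2 := by
    rw [hAx]
    conv_lhs => rw [hxd]
    simp only [inner_add_left, inner_add_right, inner_smul_left, inner_smul_right,
      horth, horth', conj_trivial]
    rw [real_inner_self_eq_norm_sq, real_inner_self_eq_norm_sq, hu₁, hu₂]
    ring
  have hq : rq A x = (μ * a ^ 2 + ν * b ^ 2) / (a ^ 2 + b ^ 2) := by
    rw [rq, hiAx, real_inner_self_eq_norm_sq, hxn]
  obtain ⟨q, hqd⟩ : ∃ q, rq A x = q := ⟨_, rfl⟩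
  rw [hqd] at hq
  have hres : res A x = ((μ - q) * a) • u₁ + ((ν - q) * b) • u₂ := by
    rw [res, hAx, hqd]
    conv_lhs => rw [hxd]
    module
  have hresn : ‖res A x‖ ^ 2 = ((μ - q) * a) ^ 2 + ((ν - q) * b) ^ 2 := by
    rw [hres]; exact hgen _ _
  have hR : (0:ℝ) ≤ (μ - ν) * |a| * |b| / ‖x‖ := by
    have : (0:ℝ) ≤ μ - ν := by linarith
    positivity
  have hresval : ‖res A x‖ = (μ - ν) * |a| * |b| / ‖x‖ := by
    have h0 : ‖res A x‖ ^ 2 * ‖x‖ ^ 2 = ((μ - ν) * |a| * |b|) ^ 2 := by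
      have habs : ((μ - ν) * |a| * |b|) ^ 2 = (μ - ν) ^ 2 * a ^ 2 * b ^ 2 := by
        rw [mul_pow, mul_pow, sq_abs, sq_abs]
      rw [hresn, hq, hxn, habs]
      field_simp
      ring
    have h1 : ‖res A x‖ ^ 2 = ((μ - ν) * |a| * |b| / ‖x‖) ^ 2 := by
      rw [div_pow, eq_div_iff (by positivity : (0:ℝ) < ‖x‖ ^ 2).ne']
      exact h0
    calc ‖res A x‖ = Real.sqrt (‖res A x‖ ^ 2) := (Real.sqrt_sq (norm_nonneg _)).symm
      _ = Real.sqrt (((μ - ν) * |a| * |b| / ‖x‖) ^ 2) := by rw [h1]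
      _ = (μ - ν) * |a| * |b| / ‖x‖ := Real.sqrt_sq hR
  -- the angle
  have hle : |a| ≤ ‖x‖ := by
    have h' : a ^ 2 ≤ ‖x‖ ^ 2 := by rw [hxn]; nlinarith [sq_nonneg b]
    nlinarith [abs_nonneg a, sq_abs a, norm_nonneg x]
  have hcos : |⟪x, u₁⟫| / (‖x‖ * ‖u₁‖) = |a| / ‖x‖ := by
    rw [hu₁, real_inner_comm, ← ha, mul_one]
  have hcosv : Real.cos (ang x u₁) = |a| / ‖x‖ := by
    rw [ang, hcos]
    have h0 : (0:ℝ) ≤ |a| / ‖x‖ := by positivity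
    exact Real.cos_arccos (le_trans (by norm_num : (-1:ℝ) ≤ 0) h0)
      ((div_le_one hxpos).mpr hle)
  have hsinv : Real.sin (ang x u₁) = |b| / ‖x‖ := by
    rw [ang, hcos, Real.sin_arccos]
    have h2 : 1 - (|a| / ‖x‖) ^ 2 = (|b| / ‖x‖) ^ 2 := by
      rw [div_pow, div_pow, sq_abs, sq_abs]
      field_simp
      rw [hxn]; ring
    rw [h2, Real.sqrt_sq (by positivity)]
  rw [Real.sin_two_mul, hcosv, hsinv, hresval]
  field_simp
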